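/- Let N = qD with q = p^r, gcd(p, D) = 1, D > 1, and let ℓ be a prime divisor of D. In 𝔽_p[T], the reductions F̄_p(T) = (T^N−1)/((T^{N/p}−1)Φ̄_N(T)) and F̄_ℓ(T) = (T^N−1)/((T^{N/ℓ}−1)Φ̄_N(T)) satisfy: F̄_p(T) = (∏_{M∣D, M≠D} Φ̄_M(T))^{φ(q)}, and F̄_p is not divisible by Φ̄_D(T), while for any proper divisor M of D, choosing ℓ a prime divisor of D/M gives gcd(F̄_ℓ(T), Φ̄_M(T)) = 1; consequently gcd over all prime divisors p_i of N of F̄_{p_i}(T) is 1 in 𝔽_p[T]. -/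

import Mathlib

open Polynomial

theorem Fbar_coprime (N D p r : ℕ) (hp : p.Prime) (hr : 0 < r) (hD : 1 < D)
    (hpD : ¬ p ∣ D) (hN : N = p ^ r * D)
    (F : ℕ → Polynomial (ZMod p))
    (hF : ∀ q ∈ N.primeFactors,
      F q * (((X : Polynomial (ZMod p)) ^ (N / q) - 1) * cyclotomic N (ZMod p)) =
        (X : Polynomial (ZMod p)) ^ N - 1) :
    F p = (∏ M ∈ D.divisors.erase D, cyclotomic M (ZMod p)) ^ Nat.totient (p ^ r) ∧
    ¬ cyclotomic D (ZMod p) ∣ F p ∧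
    (∀ M ∈ D.divisors, M ≠ D → ∀ ℓ ∈ (D / M).primeFactors,
      IsCoprime (F ℓ) (cyclotomic M (ZMod p))) ∧
    (∀ h : Polynomial (ZMod p), (∀ q ∈ N.primeFactors, h ∣ F q) → IsUnit h) := by
  haveI : Fact p.Prime := ⟨hp⟩
  have hD0 : 0 < D := by omega
  have hN0 : 0 < N := by
    rw [hN]; exact Nat.mul_pos (Nat.pow_pos (n := r) hp.pos) hD0
  set e := (p ^ r).totient with he
  set P : Polynomial (ZMod p) := ∏ M ∈ D.divisors.erase D, cyclotomic M (ZMod p) with hP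
  have hee : e = p ^ r - p ^ (r - 1) := by
    rw [he, Nat.totient_prime_pow hp hr, Nat.mul_sub, mul_one, ← pow_succ]
    congr 2
    omega
  have hfrob : ∀ k d : ℕ, ((X : Polynomial (ZMod p)) ^ d - 1) ^ p ^ k
      = X ^ (p ^ k * d) - 1 := by
    intro k d
    rw [sub_pow_char_pow, one_pow, ← pow_mul, mul_comm d]
  have hXD : (X : Polynomial (ZMod p)) ^ D - 1 = cyclotomic D (ZMod p) * P := by
    rw [hP, ← prod_cyclotomic_eq_X_pow_sub_one hD0 (ZMod p)]
    exact (Finset.mul_prod_erase _ _ (Nat.mem_divisors_self D hD0.ne')).symm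
  have hsep : ((X : Polynomial (ZMod p)) ^ D - 1).Separable := by
    rw [X_pow_sub_one_separable_iff]
    intro h
    exact hpD ((ZMod.natCast_eq_zero_iff D p).mp h)
  have hcycN : cyclotomic N (ZMod p) = cyclotomic D (ZMod p) ^ e := by
    rw [hN, cyclotomic_mul_prime_pow_eq (ZMod p) hpD hr, hee]
  have hXDne : ((X : Polynomial (ZMod p)) ^ D - 1) ≠ 0 := by
    rw [hXD]
    exact mul_ne_zero (cyclotomic_ne_zero D _) (by
      rw [hP]
      exact Finset.prod_ne_zero_iff.mpr fun M _ => cyclotomic_ne_zero M _)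
  -- Part 1
  have hpN : p ∈ N.primeFactors := by
    refine Nat.mem_primeFactors.mpr ⟨hp, ?_, hN0.ne'⟩
    rw [hN]
    exact Dvd.dvd.mul_right (dvd_pow_self p hr.ne') D
  have hNp : N / p = p ^ (r - 1) * D := by
    rw [hN, show p ^ r = p * p ^ (r - 1) by rw [← pow_succ']; congr 1; omega,
      mul_assoc, Nat.mul_div_cancel_left _ hp.pos]
  have hFp := hF p hpN
  rw [hNp, hcycN, hN, ← hfrob (r - 1) D, ← hfrob r D] at hFp
  have hsplit : ((X : Polynomial (ZMod p)) ^ D - 1) ^ p ^ r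
      = ((X : Polynomial (ZMod p)) ^ D - 1) ^ p ^ (r - 1) * cyclotomic D (ZMod p) ^ e
        * P ^ e := by
    have hle : p ^ (r - 1) ≤ p ^ r := Nat.pow_le_pow_right hp.pos (by omega)
    rw [mul_assoc, ← mul_pow, ← hXD, ← pow_add, hee, Nat.add_sub_cancel' hle]
  have part1 : F p = P ^ e := by
    have hne : ((X : Polynomial (ZMod p)) ^ D - 1) ^ p ^ (r - 1)
        * cyclotomic D (ZMod p) ^ e ≠ 0 :=
      mul_ne_zero (pow_ne_zero _ hXDne) (pow_ne_zero _ (cyclotomic_ne_zero D _))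
    apply mul_right_cancel₀ hne
    rw [hFp, hsplit]
    ring
  have hcopDP : IsCoprime (cyclotomic D (ZMod p)) P := by
    have := hsep
    rw [hXD] at this
    exact this.isCoprime
  have hDnotunit : ¬ IsUnit (cyclotomic D (ZMod p)) := by
    intro h
    have := Polynomial.natDegree_eq_zero_of_isUnit h
    rw [natDegree_cyclotomic] at this
    exact absurd this (Nat.totient_pos.mpr hD0).ne'
  have part2 : ¬ cyclotomic D (ZMod p) ∣ F p := by
    rw [part1]
    intro hdvd
    exact hDnotunit ((hcopDP.pow_right).isUnit_of_dvd hdvd)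
  have part3 : ∀ M ∈ D.divisors, M ≠ D → ∀ ℓ ∈ (D / M).primeFactors,
      IsCoprime (F ℓ) (cyclotomic M (ZMod p)) := by
    intro M hM hMD ℓ hℓ
    obtain ⟨hMdvd, -⟩ := Nat.mem_divisors.mp hM
    obtain ⟨hℓp, hℓdvd, -⟩ := Nat.mem_primeFactors.mp hℓ
    have hℓD : ℓ ∣ D := hℓdvd.trans (Nat.div_dvd_of_dvd hMdvd)
    have hMDl : M ∣ D / ℓ := by
      rw [Nat.dvd_div_iff_mul_dvd hℓD]
      calc ℓ * M ∣ (D / M) * M := mul_dvd_mul_right hℓdvd M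
        _ = D := Nat.div_mul_cancel hMdvd
    have hDl0 : 0 < D / ℓ := Nat.div_pos (Nat.le_of_dvd hD0 hℓD) hℓp.pos
    have hℓN : ℓ ∈ N.primeFactors :=
      Nat.mem_primeFactors.mpr ⟨hℓp, hℓD.trans (hN ▸ dvd_mul_left D (p ^ r)), hN0.ne'⟩
    have hNl : N / ℓ = p ^ r * (D / ℓ) := by
      rw [hN, Nat.mul_div_assoc _ hℓD]
    -- Φ_M divides X^{D/ℓ} - 1 and X^D - 1
    have hdvd1 : cyclotomic M (ZMod p) ∣ (X : Polynomial (ZMod p)) ^ (D / ℓ) - 1 := by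
      rw [← prod_cyclotomic_eq_X_pow_sub_one hDl0]
      exact Finset.dvd_prod_of_mem _ (Nat.mem_divisors.mpr ⟨hMDl, hDl0.ne'⟩)
    have hdvd2 : cyclotomic M (ZMod p) ∣ (X : Polynomial (ZMod p)) ^ D - 1 := by
      rw [← prod_cyclotomic_eq_X_pow_sub_one hD0]
      exact Finset.dvd_prod_of_mem _ hM
    obtain ⟨S, hS⟩ := hdvd1
    obtain ⟨Q, hQ⟩ := hdvd2
    have hcopMQ : IsCoprime (cyclotomic M (ZMod p)) Q := by
      have := hsep
      rw [hQ] at this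
      exact this.isCoprime
    have hFl := hF ℓ hℓN
    rw [hNl, hcycN, hN, ← hfrob r (D / ℓ), ← hfrob r D, hS, hQ, mul_pow, mul_pow] at hFl
    have hMne : cyclotomic M (ZMod p) ^ p ^ r ≠ 0 :=
      pow_ne_zero _ (cyclotomic_ne_zero M _)
    have key : F ℓ * (S ^ p ^ r * cyclotomic D (ZMod p) ^ e) = Q ^ p ^ r := by
      apply mul_left_cancel₀ hMne
      rw [← hFl]
      ring
    have hdvdQ : F ℓ ∣ Q ^ p ^ r := ⟨_, key.symm⟩
    exact ((hcopMQ.pow_right).of_isCoprime_of_dvd_right hdvdQ).symm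
  refine ⟨part1, part2, part3, ?_⟩
  intro h hh
  have hcophP : IsCoprime h P := by
    rw [hP]
    apply IsCoprime.prod_right
    intro M hM
    obtain ⟨hMD, hMmem⟩ : M ≠ D ∧ M ∈ D.divisors := Finset.mem_erase.mp hM
    obtain ⟨hMdvd, -⟩ := Nat.mem_divisors.mp hMmem
    have hDM1 : D / M ≠ 1 := by
      intro h1
      exact hMD (by rw [← Nat.div_mul_cancel hMdvd, h1, one_mul])
    set ℓ := (D / M).minFac with hℓ
    have hℓp : ℓ.Prime := Nat.minFac_prime hDM1
    have hDM0 : 0 < D / M :=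
      Nat.div_pos (Nat.le_of_dvd hD0 hMdvd) (Nat.pos_of_mem_divisors hMmem)
    have hℓmem : ℓ ∈ (D / M).primeFactors :=
      Nat.mem_primeFactors.mpr ⟨hℓp, Nat.minFac_dvd _, hDM0.ne'⟩
    have hℓD : ℓ ∣ D := (Nat.minFac_dvd _).trans (Nat.div_dvd_of_dvd hMdvd)
    have hℓN : ℓ ∈ N.primeFactors :=
      Nat.mem_primeFactors.mpr ⟨hℓp, hℓD.trans (hN ▸ dvd_mul_left D (p ^ r)), hN0.ne'⟩
    exact (part3 M hMmem hMD ℓ hℓmem).of_isCoprime_of_dvd_left (hh ℓ hℓN)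
  have hdvdP : h ∣ P ^ e := part1 ▸ hh p hpN
  exact (hcophP.pow_right).isUnit_of_dvd hdvdP
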